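/- For any probability vector π* on [n] with π* > 0, the payoff matrix α_{ij} = π*_i + π*_j − δ_{ij} (with δ_{ij} the Kronecker delta) satisfies the KKT conditions certifying that π* is a maximin strategy of the associated zero-sum game, with t* = Σ_i (π*_i)² and u* = π*. In particular π* is a Nash solution. -/
import Mathlib


open Finset

/-- A probability vector on `Fin n`. -/
def IsProb {n : ℕ} (π : Fin n → ℝ) : Prop := (∀ i, 0 ≤ π i) ∧ ∑ i, π i = 1

/-- Expected payoff of the two-player game with payoff matrix `A`. -/
def payoff {n : ℕ} (A : Fin n → Fin n → ℝ) (π π' : Fin n → ℝ) : ℝ :=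
  ∑ i, ∑ j, π i * π' j * A i j

/-- Nash equilibrium of the zero-sum game with payoff matrix `A`. -/
def IsNash {n : ℕ} (A : Fin n → Fin n → ℝ) (π₁ π₂ : Fin n → ℝ) : Prop :=
  IsProb π₁ ∧ IsProb π₂ ∧
  (∀ π, IsProb π → payoff A π π₂ ≤ payoff A π₁ π₂) ∧
  (∀ π', IsProb π' → payoff A π₁ π₂ ≤ payoff A π₁ π')


/-- The worst-case payoff for the first player playing `π`. -/
noncomputable def worstCase {n : ℕ} (A : Fin n → Fin n → ℝ) (π : Fin n → ℝ) : ℝ :=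
  sInf ((fun π' => payoff A π π') '' {π' | IsProb π'})

/-- `π` is an optimal maximin strategy for the first player. -/
def IsMaximin {n : ℕ} (A : Fin n → Fin n → ℝ) (π : Fin n → ℝ) : Prop :=
  IsProb π ∧ ∀ π', IsProb π' → worstCase A π' ≤ worstCase A π

lemma payoff_expand {n : ℕ} (πs π π' : Fin n → ℝ) :
    payoff (fun i j => πs i + πs j - if i = j then 1 else 0) π π'
      = (∑ j, π' j) * (∑ i, π i * πs i) + (∑ i, π i) * (∑ j, π' j * πs j)
        - ∑ i, π i * π' i := by
  unfold payoff
  have h : ∀ i : Fin n, ∑ j, π i * π' j * (πs i + πs j - if i = j then 1 else 0)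
      = (∑ j, π' j) * (π i * πs i) + π i * (∑ j, π' j * πs j) - π i * π' i := by
    intro i
    have : ∀ j : Fin n, π i * π' j * (πs i + πs j - if i = j then 1 else 0)
        = π' j * (π i * πs i) + π i * (π' j * πs j)
          - (if j = i then π i * π' j else 0) := by
      intro j
      by_cases hij : i = j
      · subst hij; simp; ring
      · have hji : ¬ j = i := fun h => hij h.symm
        simp [hij, hji]; ring
    rw [Finset.sum_congr rfl (fun j _ => this j)]
    rw [Finset.sum_sub_distrib, Finset.sum_add_distrib, ← Finset.sum_mul,
      ← Finset.mul_sum, Finset.sum_ite_eq' Finset.univ i (fun j => π i * π' j)]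
    simp
  rw [Finset.sum_congr rfl (fun i _ => h i)]
  rw [Finset.sum_sub_distrib, Finset.sum_add_distrib, ← Finset.mul_sum,
    ← Finset.sum_mul]

lemma payoff_prob {n : ℕ} (πs π π' : Fin n → ℝ) (h : IsProb π) (h' : IsProb π') :
    payoff (fun i j => πs i + πs j - if i = j then 1 else 0) π π'
      = (∑ i, π i * πs i) + (∑ j, π' j * πs j) - ∑ i, π i * π' i := by
  rw [payoff_expand, h.2, h'.2, one_mul, one_mul]

theorem stmt_13 {n : ℕ} (πs : Fin n → ℝ) (hpos : ∀ i, 0 < πs i) (hsum : ∑ i, πs i = 1) :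
    (∀ j, ∑ i, πs i * (πs i + πs j - if i = j then 1 else 0) ≤ ∑ i, (πs i) ^ 2) ∧
    (∀ j, πs j * ((∑ i, πs i * (πs i + πs j - if i = j then 1 else 0)) - ∑ i, (πs i) ^ 2) = 0) ∧
    (∀ i, ∑ j, (πs i + πs j - if i = j then 1 else 0) * πs j = ∑ i, (πs i) ^ 2) ∧
    IsMaximin (fun i j => πs i + πs j - if i = j then 1 else 0) πs := by
  have hprob : IsProb πs := ⟨fun i => (hpos i).le, hsum⟩
  have key : ∀ j, ∑ i, πs i * (πs i + πs j - if i = j then 1 else 0) = ∑ i, (πs i) ^ 2 := by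
    intro j
    have : ∀ i : Fin n, πs i * (πs i + πs j - if i = j then 1 else 0)
        = (πs i) ^ 2 + πs i * πs j - (if i = j then πs i else 0) := by
      intro i; by_cases hij : i = j <;> simp [hij] <;> ring
    rw [Finset.sum_congr rfl (fun i _ => this i), Finset.sum_sub_distrib,
      Finset.sum_add_distrib, ← Finset.sum_mul, hsum,
      Finset.sum_ite_eq' Finset.univ j πs]
    simp
  have key2 : ∀ i, ∑ j, (πs i + πs j - if i = j then 1 else 0) * πs j = ∑ i, (πs i) ^ 2 := by
    intro i
    have : ∀ j : Fin n, (πs i + πs j - if i = j then 1 else 0) * πs j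
        = πs i * πs j + (πs j) ^ 2 - (if j = i then πs j else 0) := by
      intro j
      by_cases hij : i = j
      · subst hij; simp; ring
      · have hji : ¬ j = i := fun h => hij h.symm
        simp [hij, hji]; ring
    rw [Finset.sum_congr rfl (fun j _ => this j), Finset.sum_sub_distrib,
      Finset.sum_add_distrib, ← Finset.mul_sum, hsum,
      Finset.sum_ite_eq' Finset.univ i πs]
    simp
  refine ⟨fun j => le_of_eq (key j), fun j => by rw [key j]; ring, key2, hprob, ?_⟩
  -- maximin part
  set A : Fin n → Fin n → ℝ := fun i j => πs i + πs j - if i = j then 1 else 0 with hA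
  have hSval : ∀ π', IsProb π' → payoff A πs π' = ∑ i, (πs i) ^ 2 := by
    intro π' h'
    rw [hA, payoff_prob πs πs π' hprob h']
    have : ∀ i : Fin n, πs i * πs i = (πs i)^2 := fun i => (sq (πs i)).symm
    rw [Finset.sum_congr rfl (fun i _ => this i)]
    have hcomm : ∑ j, π' j * πs j = ∑ i, πs i * π' i := by
      exact Finset.sum_congr rfl (fun i _ => mul_comm _ _)
    rw [hcomm]; ring
  have hWs : worstCase A πs = ∑ i, (πs i) ^ 2 := by
    unfold worstCase
    have himg : (fun π' => payoff A πs π') '' {π' | IsProb π'} = {∑ i, (πs i) ^ 2} := by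
      ext x
      constructor
      · rintro ⟨π', hπ', rfl⟩; exact hSval π' hπ'
      · rintro rfl; exact ⟨πs, hprob, hSval πs hprob⟩
    rw [himg, csInf_singleton]
  intro π' hπ'
  rw [hWs]
  -- worstCase A π' ≤ payoff A π' πs = ∑ πs i ^ 2
  have hmem : payoff A π' πs ∈ (fun q => payoff A π' q) '' {q | IsProb q} :=
    ⟨πs, hprob, rfl⟩
  have hval : payoff A π' πs = ∑ i, (πs i) ^ 2 := by
    rw [hA, payoff_prob πs π' πs hπ' hprob]
    have : ∀ i : Fin n, πs i * πs i = (πs i)^2 := fun i => (sq (πs i)).symm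
    rw [Finset.sum_congr rfl (fun i _ => this i)]
    ring
  have hbdd : BddBelow ((fun q => payoff A π' q) '' {q | IsProb q}) := by
    refine ⟨-1, ?_⟩
    rintro x ⟨q, hq, rfl⟩
    dsimp only
    rw [hA, payoff_prob πs π' q hπ' hq]
    have h1 : 0 ≤ ∑ i, π' i * πs i :=
      Finset.sum_nonneg fun i _ => mul_nonneg (hπ'.1 i) (hpos i).le
    have h2 : 0 ≤ ∑ j, q j * πs j :=
      Finset.sum_nonneg fun j _ => mul_nonneg (hq.1 j) (hpos j).le
    have h3 : ∑ i, π' i * q i ≤ 1 := by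
      calc ∑ i, π' i * q i ≤ ∑ i, π' i * 1 := by
            refine Finset.sum_le_sum fun i _ => ?_
            have : q i ≤ 1 := by
              have := Finset.single_le_sum (f := q) (fun j _ => hq.1 j) (Finset.mem_univ i)
              linarith [hq.2]
            exact mul_le_mul_of_nonneg_left this (hπ'.1 i)
        _ = 1 := by simp [hπ'.2]
    linarith
  calc worstCase A π' ≤ payoff A π' πs := csInf_le hbdd hmem
    _ = ∑ i, (πs i) ^ 2 := hval
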